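/- Interpolation inequality for ψ-ellipsoidal functions: let ψ: [0,∞) → ℝ ∪ {+∞} be convex with ψ(0)=0, let A₁, A₂ be positive-definite symmetric d×d matrices, a₁, a₂ ∈ ℝ^d, α₁, α₂ > 0, and β₁,β₂>0 with β₁+β₂=1. Set A = β₁A₁ + β₂A₂, α = α₁^{β₁}α₂^{β₂}, and a = A⁻¹(β₁A₁a₁ + β₂A₂a₂). Then for all x ∈ ℝ^d, (α₁e^{-ψ(|A₁(x-a₁)|)})^{β₁} · (α₂e^{-ψ(|A₂(x-a₂)|)})^{β₂} ≤ α e^{-ψ(|A(x-a)|)}. -/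

import Mathlib

/-- Identity coercion from plain vectors to Euclidean space (they are definitionally equal). -/
def toE {d : ℕ} (v : Fin d → ℝ) : EuclideanSpace ℝ (Fin d) := WithLp.toLp 2 v

theorem stmt_8 (d : ℕ) (ψ : ℝ → ℝ)
    (hconv : ConvexOn ℝ (Set.Ici 0) ψ) (hψ0 : ψ 0 = 0)
    (hmono : ∀ x y : ℝ, 0 ≤ x → x ≤ y → ψ x ≤ ψ y)
    (A₁ A₂ : Matrix (Fin d) (Fin d) ℝ) (h₁ : A₁.PosDef) (h₂ : A₂.PosDef)
    (a₁ a₂ : EuclideanSpace ℝ (Fin d)) (α₁ α₂ β₁ β₂ : ℝ)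
    (hα₁ : 0 < α₁) (hα₂ : 0 < α₂) (hβ₁ : 0 < β₁) (hβ₂ : 0 < β₂) (hβ : β₁ + β₂ = 1) :
    ∀ x : EuclideanSpace ℝ (Fin d),
      (α₁ * Real.exp (-ψ ‖toE (A₁.mulVec (x - a₁))‖)) ^ β₁ *
        (α₂ * Real.exp (-ψ ‖toE (A₂.mulVec (x - a₂))‖)) ^ β₂ ≤
      (α₁ ^ β₁ * α₂ ^ β₂) *
        Real.exp (-ψ ‖toE ((β₁ • A₁ + β₂ • A₂).mulVec
          (x - toE ((β₁ • A₁ + β₂ • A₂)⁻¹.mulVec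
            (β₁ • A₁.mulVec a₁ + β₂ • A₂.mulVec a₂))))‖) := by
  intro x
  set A : Matrix (Fin d) (Fin d) ℝ := β₁ • A₁ + β₂ • A₂ with hA
  -- A is positive definite
  have hApd : A.PosDef := by
    constructor
    · show (β₁ • A₁ + β₂ • A₂).conjTranspose = _
      rw [Matrix.conjTranspose_add, Matrix.conjTranspose_smul, Matrix.conjTranspose_smul,
        h₁.1.eq, h₂.1.eq, star_trivial, star_trivial]
    · intro y hy
      exact ((h₁.smul hβ₁).add (h₂.smul hβ₂)).2 hy
  have hdet : IsUnit A.det := isUnit_iff_ne_zero.mpr (ne_of_gt hApd.det_pos)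
  set s : Fin d → ℝ := β₁ • A₁.mulVec a₁ + β₂ • A₂.mulVec a₂ with hs
  have hAs : A.mulVec (A⁻¹.mulVec s) = s := by
    rw [Matrix.mulVec_mulVec, Matrix.mul_nonsing_inv A hdet, Matrix.one_mulVec]
  set v₁ : Fin d → ℝ := A₁.mulVec (x - a₁)
  set v₂ : Fin d → ℝ := A₂.mulVec (x - a₂)
  have key : A.mulVec (x - toE (A⁻¹.mulVec s)) = β₁ • v₁ + β₂ • v₂ := by
    have step : A.mulVec (x - toE (A⁻¹.mulVec s)) = A.mulVec x - s := by
      rw [Matrix.mulVec_sub]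
      congr 1
    have hx : A.mulVec x = β₁ • A₁.mulVec x + β₂ • A₂.mulVec x := by
      simp [hA, Matrix.add_mulVec, Matrix.smul_mulVec]
    have e1 : v₁ = A₁.mulVec x - A₁.mulVec a₁ := by
      show A₁.mulVec (x - a₁) = _; rw [Matrix.mulVec_sub]
    have e2 : v₂ = A₂.mulVec x - A₂.mulVec a₂ := by
      show A₂.mulVec (x - a₂) = _; rw [Matrix.mulVec_sub]
    rw [step, hx, hs, e1, e2]
    module
  -- norm inequality
  have hnorm : ‖toE (A.mulVec (x - toE (A⁻¹.mulVec s)))‖ ≤ β₁ * ‖toE v₁‖ + β₂ * ‖toE v₂‖ := by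
    have e2 : toE (A.mulVec (x - toE (A⁻¹.mulVec s))) = β₁ • toE v₁ + β₂ • toE v₂ := by
      rw [show toE (A.mulVec (x - toE (A⁻¹.mulVec s))) = WithLp.toLp 2 (A.mulVec (x - toE (A⁻¹.mulVec s))) from rfl, key]
      rfl
    rw [e2]
    calc ‖β₁ • toE v₁ + β₂ • toE v₂‖ ≤ ‖β₁ • toE v₁‖ + ‖β₂ • toE v₂‖ := norm_add_le _ _
      _ = β₁ * ‖toE v₁‖ + β₂ * ‖toE v₂‖ := by
          rw [norm_smul, norm_smul, Real.norm_of_nonneg hβ₁.le, Real.norm_of_nonneg hβ₂.le]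
  have hψle : ψ ‖toE (A.mulVec (x - toE (A⁻¹.mulVec s)))‖ ≤ β₁ * ψ ‖toE v₁‖ + β₂ * ψ ‖toE v₂‖ := by
    calc ψ ‖toE (A.mulVec (x - toE (A⁻¹.mulVec s)))‖
        ≤ ψ (β₁ * ‖toE v₁‖ + β₂ * ‖toE v₂‖) := hmono _ _ (norm_nonneg _) hnorm
      _ ≤ β₁ * ψ ‖toE v₁‖ + β₂ * ψ ‖toE v₂‖ := by
          have := hconv.2 (Set.mem_Ici.mpr (norm_nonneg (toE v₁)))
            (Set.mem_Ici.mpr (norm_nonneg (toE v₂))) hβ₁.le hβ₂.le hβ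
          simpa [smul_eq_mul] using this
  -- rewrite LHS
  have hL : (α₁ * Real.exp (-ψ ‖toE v₁‖)) ^ β₁ * (α₂ * Real.exp (-ψ ‖toE v₂‖)) ^ β₂
      = (α₁ ^ β₁ * α₂ ^ β₂) * Real.exp (-(β₁ * ψ ‖toE v₁‖ + β₂ * ψ ‖toE v₂‖)) := by
    rw [Real.mul_rpow hα₁.le (Real.exp_pos _).le, Real.mul_rpow hα₂.le (Real.exp_pos _).le,
      ← Real.exp_mul, ← Real.exp_mul, mul_mul_mul_comm, ← Real.exp_add]
    ring_nf
  rw [hL]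
  have hαpos : 0 < α₁ ^ β₁ * α₂ ^ β₂ := by positivity
  exact mul_le_mul_of_nonneg_left (Real.exp_le_exp.mpr (neg_le_neg hψle)) hαpos.le
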